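/- Let γ < ω^ω and let α ≤ γ with CB(α) ≠ 0. Then the set T(α) = {β : β <* α} ∪ {α}, considered as a subspace of γ with the order topology, is order-isomorphic via a homeomorphism to the ordinal ω^{CB(α)} + 1. -/

import Mathlib

open Ordinal Set

/-- Cantor–Bendixson rank of an ordinal: the exponent of the last term of its
Cantor normal form, with `CB 0 = 0`. -/
noncomputable def CB (o : Ordinal) : Ordinal :=
  ((Ordinal.CNF Ordinal.omega0 o).getLast?.map Prod.fst).getD 0

/-- `X` is a closed copy of the ordinal `β`: there is an order isomorphism onto
`Iio β` (with the topology induced from the order topology on `Ordinal`) which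
is a homeomorphism. -/
def IsClosedCopy (X : Set Ordinal) (β : Ordinal) : Prop :=
  ∃ f : X ≃o (Set.Iio β), Continuous f ∧ Continuous f.symm

/-- `X` is homogeneous of color `i` for the pair coloring `c`. -/
def Homog (c : Ordinal → Ordinal → Fin 2) (X : Set Ordinal) (i : Fin 2) : Prop :=
  ∀ x ∈ X, ∀ y ∈ X, x < y → c x y = i

/-- The closed partition relation `γ →_cl (α,β)²`. -/
def ClPartition (γ α β : Ordinal) : Prop :=
  ∀ c : Ordinal → Ordinal → Fin 2,
    (∃ X ⊆ Set.Iio γ, IsClosedCopy X α ∧ Homog c X 0) ∨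
    (∃ X ⊆ Set.Iio γ, IsClosedCopy X β ∧ Homog c X 1)

/-- `X` is an order-isomorphic copy of the ordinal `β`. -/
def IsOrderCopy (X : Set Ordinal) (β : Ordinal) : Prop :=
  Nonempty (X ≃o Set.Iio β)

/-- The classical partition relation `γ → (α,β)²`. -/
def ClassPartition (γ α β : Ordinal) : Prop :=
  ∀ c : Ordinal → Ordinal → Fin 2,
    (∃ X ⊆ Set.Iio γ, IsOrderCopy X α ∧ Homog c X 0) ∨
    (∃ X ⊆ Set.Iio γ, IsOrderCopy X β ∧ Homog c X 1)

/-- The ordinal Ramsey number `R(α,β)`: least `γ` with `γ → (α,β)²`. -/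
noncomputable def Rord (α β : Ordinal) : Ordinal := sInf {γ | ClassPartition γ α β}

/-- The closed Ramsey number `R^cl(α,β)`: least `γ` with `γ →_cl (α,β)²`. -/
noncomputable def Rcl (α β : Ordinal) : Ordinal := sInf {γ | ClPartition γ α β}

/-- The first uncountable ordinal. -/
noncomputable def omega1 : Ordinal := (Cardinal.aleph 1).ord

/-- One step of the relation `<*`: `α = β + ω^δ` for some `δ > CB β`. -/
def stepRel (β α : Ordinal) : Prop := ∃ δ : Ordinal, CB β < δ ∧ α = β + Ordinal.omega0 ^ δ

/-- The strict partial order `<*` generated by `stepRel`. -/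
def ltStar : Ordinal → Ordinal → Prop := Relation.TransGen stepRel

/-- The reflexive partial order `≤*`. -/
def leStar : Ordinal → Ordinal → Prop := Relation.ReflTransGen stepRel

/-- `T(α) = {β : β <* α} ∪ {α}`, the subtree below the vertex `α`. -/
def Tset (α : Ordinal) : Set Ordinal := {β | ltStar β α} ∪ {α}

lemma CB_zero : CB 0 = 0 := by simp [CB]

lemma CB_rec {o : Ordinal} (ho : o ≠ 0) :
    CB o = if o % omega0 ^ Ordinal.log omega0 o = 0 then Ordinal.log omega0 o
           else CB (o % omega0 ^ Ordinal.log omega0 o) := by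
  unfold CB
  rw [Ordinal.CNF.ne_zero ho]
  split_ifs with h
  · rw [h, Ordinal.CNF.zero_right]
    simp
  · rw [List.getLast?_cons, Ordinal.CNF.ne_zero h]
    simp [List.getLast?_cons]

lemma CB_le_log {o : Ordinal} (ho : o ≠ 0) : CB o ≤ Ordinal.log omega0 o := by
  induction o using Ordinal.CNF.rec omega0 with
  | H0 => simp at ho
  | H o ho' IH =>
    rw [CB_rec ho']
    split_ifs with h
    · exact le_rfl
    · exact (IH h).trans (Ordinal.log_mono_right _ (Ordinal.mod_le _ _))

lemma CB_add_opow (x δ : Ordinal) : CB (x + omega0 ^ δ) = δ := by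
  have hop : (0:Ordinal) < omega0 ^ δ := Ordinal.opow_pos δ Ordinal.omega0_pos
  have hne : x + omega0 ^ δ ≠ 0 := (hop.trans_le le_add_self).ne'
  induction x using Ordinal.CNF.rec omega0 with
  | H0 =>
    rw [zero_add, CB_rec (Ordinal.opow_ne_zero δ Ordinal.omega0_ne_zero),
      Ordinal.log_opow one_lt_omega0]
    simp
  | H x hx IH =>
    set L := Ordinal.log omega0 x with hL
    set c := x / omega0 ^ L with hc
    set r := x % omega0 ^ L with hr
    have hxd : omega0 ^ L * c + r = x := Ordinal.div_add_mod x (omega0 ^ L)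
    have hrlt : r < omega0 ^ L := Ordinal.mod_lt x (Ordinal.opow_ne_zero L Ordinal.omega0_ne_zero)
    have hclt : c < omega0 := Ordinal.div_opow_log_lt x one_lt_omega0
    have hcpos : 0 < c := Ordinal.div_opow_log_pos omega0 hx
    have hLlog : Ordinal.log omega0 x = L := hL.symm
    clear_value L c r
    clear hL hc hr
    have hc1 : c + 1 ≤ omega0 := by
      rw [Ordinal.add_one_eq_succ]; exact Order.succ_le_of_lt hclt
    rcases lt_trichotomy δ L with hδ | rfl | hδ
    · -- δ < L
      have key : x + omega0 ^ δ = omega0 ^ L * c + (r + omega0 ^ δ) := by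
        rw [← add_assoc, hxd]
      have hr' : r + omega0 ^ δ < omega0 ^ L :=
        Ordinal.principal_add_omega0_opow L hrlt
          ((Ordinal.opow_lt_opow_iff_right one_lt_omega0).2 hδ)
      have hr'ne : r + omega0 ^ δ ≠ 0 := (hop.trans_le le_add_self).ne'
      have hylog : Ordinal.log omega0 (x + omega0 ^ δ) = L := by
        apply le_antisymm
        · rw [← Order.lt_succ_iff, ← Ordinal.lt_opow_iff_log_lt one_lt_omega0 hne]
          rw [key, Ordinal.opow_succ]
          calc omega0 ^ L * c + (r + omega0 ^ δ) < omega0 ^ L * c + omega0 ^ L :=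
                add_lt_add_right hr' _
            _ = omega0 ^ L * (c + 1) := by rw [mul_add, mul_one]
            _ ≤ omega0 ^ L * omega0 := mul_le_mul_right hc1 _
        · rw [← hLlog]
          exact Ordinal.log_mono_right _ le_self_add
      have hymod : (x + omega0 ^ δ) % omega0 ^ L = r + omega0 ^ δ := by
        rw [key, Ordinal.mul_add_mod_self, Ordinal.mod_eq_of_lt hr']
      rw [CB_rec hne, hylog, hymod, if_neg hr'ne]
      exact IH hr'ne
    · -- δ = L
      have key : x + omega0 ^ δ = omega0 ^ δ * (c + 1) := by
        rw [← hxd, add_assoc, Ordinal.add_omega0_opow hrlt, mul_add, mul_one]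
      have hylog : Ordinal.log omega0 (x + omega0 ^ δ) = δ := by
        apply le_antisymm
        · rw [← Order.lt_succ_iff, ← Ordinal.lt_opow_iff_log_lt one_lt_omega0 hne,
            key, Ordinal.opow_succ]
          have hc2 : c + 1 < omega0 := by
            rw [Ordinal.add_one_eq_succ]; exact Ordinal.isSuccLimit_omega0.succ_lt hclt
          exact (mul_lt_mul_iff_of_pos_left hop).2 hc2
        · rw [← hLlog]
          exact Ordinal.log_mono_right _ le_self_add
      have hymod : (x + omega0 ^ δ) % omega0 ^ δ = 0 := by
        rw [key]; exact Ordinal.mod_eq_zero_of_dvd (dvd_mul_right _ _)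
      rw [CB_rec hne, hylog, hymod, if_pos rfl]
    · -- L < δ
      have hxlt : x < omega0 ^ δ := by
        have h1 : x < omega0 ^ Order.succ L := by
          rw [← hLlog]; exact Ordinal.lt_opow_succ_log_self one_lt_omega0 x
        exact h1.trans_le (Ordinal.opow_le_opow_right Ordinal.omega0_pos
          (Order.succ_le_of_lt hδ))
      rw [Ordinal.add_omega0_opow hxlt, CB_rec (Ordinal.opow_ne_zero δ Ordinal.omega0_ne_zero),
        Ordinal.log_opow one_lt_omega0]
      simp

lemma exists_add_CB {o : Ordinal} (ho : o ≠ 0) : ∃ x, o = x + omega0 ^ CB o := by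
  induction o using Ordinal.CNF.rec omega0 with
  | H0 => exact absurd rfl ho
  | H o ho' IH =>
    have hxd : omega0 ^ Ordinal.log omega0 o * (o / omega0 ^ Ordinal.log omega0 o)
        + o % omega0 ^ Ordinal.log omega0 o = o := Ordinal.div_add_mod _ _
    rw [CB_rec ho']
    split_ifs with h
    · have hcpos : 0 < o / omega0 ^ Ordinal.log omega0 o :=
        Ordinal.div_opow_log_pos omega0 ho'
      obtain ⟨n, hn⟩ := Ordinal.lt_omega0.1 (Ordinal.div_opow_log_lt o one_lt_omega0)
      cases n with
      | zero => rw [hn] at hcpos; simp at hcpos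
      | succ m =>
        refine ⟨omega0 ^ Ordinal.log omega0 o * m, ?_⟩
        conv_lhs => rw [← hxd, h, add_zero, hn]
        push_cast
        rw [mul_add, mul_one]
    · obtain ⟨x, hx⟩ := IH h
      refine ⟨omega0 ^ Ordinal.log omega0 o * (o / omega0 ^ Ordinal.log omega0 o) + x, ?_⟩
      conv_lhs => rw [← hxd, hx]
      exact (add_assoc _ _ _).symm


lemma stepRel_iff {β α : Ordinal} : stepRel β α ↔ CB β < CB α ∧ α = β + omega0 ^ CB α := by
  constructor
  · rintro ⟨δ, hδ, rfl⟩
    rw [CB_add_opow]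
    exact ⟨hδ, rfl⟩
  · rintro ⟨h1, h2⟩
    exact ⟨CB α, h1, h2⟩

lemma stepRel_trans : Transitive stepRel := by
  rintro a b c ⟨δ, hδ, rfl⟩ hbc
  rw [stepRel_iff, CB_add_opow] at hbc
  obtain ⟨h1, h2⟩ := hbc
  refine ⟨CB c, hδ.trans h1, ?_⟩
  conv_lhs => rw [h2]
  rw [add_assoc, Ordinal.add_omega0_opow
    ((Ordinal.opow_lt_opow_iff_right one_lt_omega0).2 h1)]

lemma ltStar_iff {β α : Ordinal} : ltStar β α ↔ stepRel β α := by
  haveI : IsTrans Ordinal stepRel := ⟨fun _ _ _ h1 h2 => stepRel_trans h1 h2⟩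
  rw [ltStar, Relation.transGen_eq_self]

/-- The normal "shift" map. -/
noncomputable def sig (t : Ordinal) : Ordinal := if t < omega0 then t + 1 else t

lemma le_sig (t : Ordinal) : t ≤ sig t := by
  unfold sig; split_ifs
  · rw [Ordinal.add_one_eq_succ]; exact (Order.lt_succ t).le
  · exact le_rfl

lemma sig_pos (t : Ordinal) : 0 < sig t := by
  unfold sig; split_ifs with h
  · rw [Ordinal.add_one_eq_succ]; exact Order.bot_lt_succ t
  · exact Ordinal.omega0_pos.trans_le (not_lt.1 h)

lemma sig_isNormal : Order.IsNormal sig := by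
  rw [Order.isNormal_iff]
  constructor
  · intro a b hab
    unfold sig
    split_ifs with h1 h2 h2
    · rw [Ordinal.add_one_eq_succ, Ordinal.add_one_eq_succ]
      exact Order.succ_lt_succ hab
    · rw [Ordinal.add_one_eq_succ]
      exact lt_of_lt_of_le (Ordinal.isSuccLimit_omega0.succ_lt h1) (not_lt.1 h2)
    · exact absurd (hab.trans h2) h1
    · exact hab
  · intro o ho a h
    have hoω : omega0 ≤ o := Ordinal.omega0_le_of_isSuccLimit ho
    rw [sig, if_neg (not_lt.2 hoω)]
    by_contra hc
    push_neg at hc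
    have h1 := h (Order.succ a) (ho.succ_lt hc)
    exact absurd ((le_sig _).trans h1) (not_le.2 (Order.lt_succ a))


/-- For `γ < ω^ω`, `α ≤ γ` with `CB α ≠ 0`, the set `T(α)` is order-isomorphic
via a homeomorphism to the ordinal `ω^{CB α} + 1`. -/
theorem stmt_16 (γ α : Ordinal) (hγ : γ < Ordinal.omega0 ^ Ordinal.omega0)
    (hα : α ≤ γ) (hCB : CB α ≠ 0) :
    IsClosedCopy (Tset α) (Ordinal.omega0 ^ CB α + 1) := by
  set e := CB α with he
  have hα0 : α ≠ 0 := by rintro rfl; exact hCB CB_zero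
  have hop : (0:Ordinal) < omega0 ^ e := Ordinal.opow_pos e Ordinal.omega0_pos
  obtain ⟨x, hx⟩ := exists_add_CB hα0
  set S : Set Ordinal := {β | β + omega0 ^ e = α} with hS
  have hSne : S.Nonempty := ⟨x, hx.symm⟩
  set μ := sInf S with hμ
  have hμS : μ + omega0 ^ e = α := csInf_mem hSne
  have hμle : ∀ β ∈ S, μ ≤ β := fun β hβ => csInf_le (OrderBot.bddBelow S) hβ
  have hμα : μ < α := by
    rw [← hμS]; exact lt_add_of_pos_right μ hop
  -- interval property
  have hint : ∀ β, μ ≤ β → β < α → β ∈ S := by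
    intro β h1 h2
    have hβ : μ + (β - μ) = β := Ordinal.add_sub_cancel_of_le h1
    have ht : β - μ < omega0 ^ e := by
      rw [← add_lt_add_iff_left μ, hβ, hμS]; exact h2
    show β + omega0 ^ e = α
    rw [← hβ, add_assoc, Ordinal.add_omega0_opow ht, hμS]
  -- CB of elements strictly between μ and α
  have hCBlt : ∀ β, μ < β → β < α → CB β < e := by
    intro β h1 h2
    have hβ : μ + (β - μ) = β := Ordinal.add_sub_cancel_of_le h1.le
    have htne : β - μ ≠ 0 := by
      intro h; rw [h, add_zero] at hβ; exact h1.ne' hβ.symm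
    have ht : β - μ < omega0 ^ e := by
      rw [← add_lt_add_iff_left μ, hβ, hμS]; exact h2
    obtain ⟨u, hu⟩ := exists_add_CB htne
    have hCBβ : CB β = CB (β - μ) := by
      conv_lhs => rw [← hβ, hu]
      rw [← add_assoc, CB_add_opow]
    rw [hCBβ]
    exact lt_of_le_of_lt (CB_le_log htne)
      ((Ordinal.lt_opow_iff_log_lt one_lt_omega0 htne).1 ht)
  -- minimality of μ
  have hμCB : μ ≠ 0 → ¬ CB μ < e := by
    intro hμ0 hlt
    obtain ⟨y, hy⟩ := exists_add_CB hμ0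
    have hyS : y ∈ S := by
      show y + omega0 ^ e = α
      rw [← hμS]
      conv_rhs => rw [hy]
      rw [add_assoc, Ordinal.add_omega0_opow
        ((Ordinal.opow_lt_opow_iff_right one_lt_omega0).2 hlt)]
    have : μ ≤ y := hμle y hyS
    have hylt : y < μ := by
      conv_rhs => rw [hy]
      exact lt_add_of_pos_right y (Ordinal.opow_pos _ Ordinal.omega0_pos)
    exact absurd this (not_le.2 hylt)
  -- characterization of stepRel into α
  have hstep : ∀ β, stepRel β α ↔ (β ∈ S ∧ CB β < e) := by
    intro β
    rw [stepRel_iff, ← he]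
    constructor
    · rintro ⟨h1, h2⟩; exact ⟨h2.symm, h1⟩
    · rintro ⟨h1, h2⟩; exact ⟨h2, h1.symm⟩
  have hSlt : ∀ β ∈ S, β < α := by
    intro β hβ
    have hβ' : β + omega0 ^ e = α := hβ
    rw [← hβ']
    exact lt_add_of_pos_right β hop
  by_cases hμ0 : μ = 0
  · -- α = ω ^ e, Tset α = Iic α
    have hαe : α = omega0 ^ e := by rw [← hμS, hμ0, zero_add]
    have hT : Tset α = Iio (omega0 ^ e + 1) := by
      ext β
      rw [Ordinal.add_one_eq_succ, ← hαe]
      constructor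
      · rintro (hβ | rfl)
        · rw [mem_setOf_eq, ltStar_iff, hstep] at hβ
          exact Order.lt_succ_of_le (hSlt β hβ.1).le
        · exact Order.lt_succ_of_le (le_refl β)
      · intro hβ
        rw [mem_Iio, Order.lt_succ_iff] at hβ
        rcases eq_or_lt_of_le hβ with rfl | hβlt
        · exact Or.inr rfl
        · left
          rw [mem_setOf_eq, ltStar_iff, hstep]
          refine ⟨hint β (hμ0 ▸ zero_le (a := β)) hβlt, ?_⟩
          rcases eq_or_ne β 0 with rfl | hβ0
          · rw [CB_zero]; exact pos_iff_ne_zero.2 hCB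
          · exact lt_of_le_of_lt (CB_le_log hβ0)
              ((Ordinal.lt_opow_iff_log_lt one_lt_omega0 hβ0).1 (hαe ▸ hβlt))
    refine ⟨OrderIso.setCongr _ _ hT, ?_, ?_⟩
    · exact Continuous.subtype_mk continuous_subtype_val _
    · exact Continuous.subtype_mk continuous_subtype_val _
  · -- Tset α = Ioc μ α
    have hT : Tset α = Ioc μ α := by
      ext β
      constructor
      · rintro (hβ | rfl)
        · rw [mem_setOf_eq, ltStar_iff, hstep] at hβ
          refine ⟨lt_of_le_of_ne (hμle β hβ.1) ?_, (hSlt β hβ.1).le⟩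
          rintro rfl
          exact hμCB hμ0 hβ.2
        · exact ⟨hμα, le_rfl⟩
      · rintro ⟨h1, h2⟩
        rcases eq_or_lt_of_le h2 with rfl | h2'
        · exact Or.inr rfl
        · exact Or.inl ((ltStar_iff).2 ((hstep β).2
            ⟨hint β h1.le h2', hCBlt β h1 h2'⟩))
    have hωe : omega0 ≤ omega0 ^ e := by
      conv_lhs => rw [← Ordinal.opow_one omega0]
      exact Ordinal.opow_le_opow_right Ordinal.omega0_pos
        (Ordinal.one_le_iff_ne_zero.2 hCB)
    have hFnorm : Order.IsNormal ((μ + ·) ∘ sig) :=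
      (Ordinal.isNormal_add_right μ).comp sig_isNormal
    have hFcont : Continuous (fun t => μ + sig t) :=
      ((Order.isNormal_iff_strictMono_and_continuous).1 hFnorm).2
    have hmem : ∀ u : Ordinal, u ≤ omega0 ^ e → μ + sig u ∈ Tset α := by
      intro u hu
      rw [hT, mem_Ioc]
      refine ⟨lt_add_of_pos_right μ (sig_pos u), ?_⟩
      rw [← hμS]
      apply add_le_add_right _ μ
      rw [sig]; split_ifs with h
      · rw [Ordinal.add_one_eq_succ]
        exact ((Ordinal.isSuccLimit_omega0.succ_lt h).trans_le hωe).le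
      · exact hu
    set φ : (Iic (omega0 ^ e) : Set Ordinal) → (Tset α : Set Ordinal) :=
      fun u => ⟨μ + sig u.1, hmem u.1 u.2⟩ with hφ
    have hmono : StrictMono φ := by
      intro u v huv
      exact Subtype.mk_lt_mk.2 (hFnorm.strictMono (Subtype.coe_lt_coe.2 huv))
    have hsurj : Function.Surjective φ := by
      rintro ⟨β, hβ⟩
      rw [hT] at hβ
      obtain ⟨h1, h2⟩ := hβ
      have hβt : μ + (β - μ) = β := Ordinal.add_sub_cancel_of_le h1.le
      have htle : β - μ ≤ omega0 ^ e := by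
        rw [← add_le_add_iff_left μ, hβt, hμS]; exact h2
      have htpos : β - μ ≠ 0 := by
        intro h; rw [h, add_zero] at hβt; exact h1.ne hβt
      by_cases hfin : β - μ < omega0
      · obtain ⟨n, hn⟩ := Ordinal.lt_omega0.1 hfin
        cases n with
        | zero => rw [hn] at htpos; simp at htpos
        | succ m =>
          refine ⟨⟨m, ((Ordinal.nat_lt_omega0 m).trans_le hωe).le⟩, ?_⟩
          apply Subtype.ext
          show μ + sig m = β
          rw [sig, if_pos (Ordinal.nat_lt_omega0 m), ← hβt, hn]
          congr 1
      · refine ⟨⟨β - μ, htle⟩, ?_⟩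
        apply Subtype.ext
        show μ + sig (β - μ) = β
        rw [sig, if_neg hfin]; exact hβt
    have hφcont : Continuous φ :=
      Continuous.subtype_mk (hFcont.comp continuous_subtype_val) _
    let iso := StrictMono.orderIsoOfSurjective φ hmono hsurj
    haveI : CompactSpace (Iic (omega0 ^ e) : Set Ordinal) :=
      isCompact_iff_compactSpace.1 (by rw [← Icc_bot]; exact isCompact_Icc)
    have hiso : Continuous (iso.toEquiv) := hφcont
    let homeo := Continuous.homeoOfEquivCompactToT2 (f := iso.toEquiv) hiso
    have hsymmcont : Continuous (⇑iso.symm) := homeo.symm.continuous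
    have hIio : (Iic (omega0 ^ e) : Set Ordinal) = Iio (omega0 ^ e + 1) := by
      ext u; simp [Order.lt_add_one_iff]
    refine ⟨iso.symm.trans (OrderIso.setCongr _ _ hIio), ?_, ?_⟩
    · exact Continuous.subtype_mk (continuous_subtype_val.comp hsymmcont) _
    · exact Continuous.subtype_mk (hFcont.comp continuous_subtype_val) _
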